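/- Let G be a graph, x ∈ V(G), and suppose S ⊆ N₂(x) is an independent set of G dominating N(x). Let S* be any maximal independent set of G ∖ {x} containing S. Then in the graph G' obtained from G by adding a pendant vertex y adjacent only to x, both S* ∪ {x} and S* ∪ {y} are maximal independent sets of G'. -/
import Mathlib


variable {V : Type*}

/-- `S` is an independent set of `G`. -/
def IndepSet (G : SimpleGraph V) (S : Set V) : Prop :=
  ∀ ⦃a⦄, a ∈ S → ∀ ⦃b⦄, b ∈ S → ¬ G.Adj a b

/-- `S` is a maximal independent set of `G`. -/
def MaxIndepSet (G : SimpleGraph V) (S : Set V) : Prop :=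
  IndepSet G S ∧ ∀ T : Set V, IndepSet G T → S ⊆ T → S = T

/-- The closed neighborhood `N[S]` of a set of vertices. -/
def ClosedNbhd (G : SimpleGraph V) (S : Set V) : Set V :=
  S ∪ {u | ∃ s ∈ S, G.Adj s u}

/-- `v` is a shedding vertex of `G`. -/
def Shedding (G : SimpleGraph V) (v : V) : Prop :=
  ∀ S : Set V, S ⊆ (G.neighborSet v ∪ {v})ᶜ → IndepSet G S →
    ∃ u ∈ G.neighborSet v, IndepSet G (S ∪ {u})

/-- `N₂(v)`: vertices at distance exactly 2 from `v`. -/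
def N2 (G : SimpleGraph V) (v : V) : Set V := {u | G.dist v u = 2}

/-- The edge `xy` is relating in `G`. -/
def Relating (G : SimpleGraph V) (x y : V) : Prop :=
  ∃ S : Set V, IndepSet G S ∧ MaxIndepSet G (S ∪ {x}) ∧ MaxIndepSet G (S ∪ {y})

/-- `G` contains a cycle of length `k` as a (not necessarily induced) subgraph. -/
def CycleLen (G : SimpleGraph V) (k : ℕ) : Prop :=
  ∃ f : ZMod k → V, Function.Injective f ∧ ∀ i : ZMod k, G.Adj (f i) (f (i + 1))

/-- The graph obtained from `G` by adding a new pendant vertex (`none`)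
adjacent only to `x`. -/
def addPendant (G : SimpleGraph V) (x : V) : SimpleGraph (Option V) :=
  SimpleGraph.fromRel (fun a b =>
    (∃ u w : V, a = some u ∧ b = some w ∧ G.Adj u w) ∨ (a = none ∧ b = some x))

lemma addPendant_adj_some_some (G : SimpleGraph V) (x u w : V) :
    (addPendant G x).Adj (some u) (some w) ↔ G.Adj u w := by
  simp only [addPendant, SimpleGraph.fromRel_adj]
  constructor
  · rintro ⟨hne, (⟨a, b, ha, hb, hab⟩ | ⟨h, -⟩) | (⟨a, b, ha, hb, hab⟩ | ⟨h, -⟩)⟩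
    · cases ha; cases hb; exact hab
    · exact absurd h (by simp)
    · cases ha; cases hb; exact hab.symm
    · exact absurd h (by simp)
  · intro h
    exact ⟨by simpa using h.ne, Or.inl (Or.inl ⟨u, w, rfl, rfl, h⟩)⟩

lemma addPendant_adj_none (G : SimpleGraph V) (x : V) (a : Option V) :
    (addPendant G x).Adj none a ↔ a = some x := by
  simp only [addPendant, SimpleGraph.fromRel_adj]
  constructor
  · rintro ⟨hne, (⟨u, w, ha, hb, hab⟩ | ⟨-, h⟩) | (⟨u, w, ha, hb, hab⟩ | ⟨-, h⟩)⟩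
    · exact absurd ha (by simp)
    · exact h
    · exact absurd hb (by simp)
    · exact absurd h (by simp)
  · rintro rfl
    exact ⟨by simp, Or.inl (Or.inr ⟨trivial, rfl⟩)⟩

theorem pendant_witness_maximal [Fintype V] (G : SimpleGraph V) (x : V)
    (S : Set V) (hS2 : S ⊆ N2 G x) (hSi : IndepSet G S)
    (hdom : G.neighborSet x ⊆ ClosedNbhd G S)
    (S' : Set V) (hsub : S ⊆ S') (hxS' : x ∉ S') (hS'i : IndepSet G S')
    (hmax : ∀ T : Set V, x ∉ T → IndepSet G T → S' ⊆ T → S' = T) :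
    MaxIndepSet (addPendant G x) ((some '' S') ∪ {some x}) ∧
    MaxIndepSet (addPendant G x) ((some '' S') ∪ {none}) := by
  -- x is not adjacent to any vertex of S'
  have hnadj : ∀ s ∈ S', ¬ G.Adj x s := by
    intro s hs hadj
    rcases hdom hadj with h | ⟨t, ht, hts⟩
    · have h2 : G.dist x s = 2 := hS2 h
      have h1 : G.dist x s = 1 := SimpleGraph.dist_eq_one_iff_adj.mpr hadj
      omega
    · exact hS'i (hsub ht) hs hts
  -- a generic fact: preimage of an independent set of G' minus x is fixed by hmax
  have key : ∀ T : Set (Option V), IndepSet (addPendant G x) T →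
      (some '' S') ⊆ T → ∀ v : V, some v ∈ T → v ≠ x → v ∈ S' := by
    intro T hTi hST v hv hvx
    have hT0 : IndepSet G {w | some w ∈ T ∧ w ≠ x} := by
      intro a ⟨ha, _⟩ b ⟨hb, _⟩ hab
      exact hTi ha hb ((addPendant_adj_some_some G x a b).mpr hab)
    have := hmax {w | some w ∈ T ∧ w ≠ x} (by simp) hT0
      (fun s hs => ⟨hST ⟨s, hs, rfl⟩, fun h => hxS' (h ▸ hs)⟩)
    rw [this]; exact ⟨hv, hvx⟩
  have hi1 : IndepSet (addPendant G x) ((some '' S') ∪ {some x}) := by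
    rintro a (⟨s, hs, rfl⟩ | rfl) b (⟨t, ht, rfl⟩ | rfl) hadj
    · exact hS'i hs ht ((addPendant_adj_some_some G x s t).mp hadj)
    · exact hnadj s hs ((addPendant_adj_some_some G x s x).mp hadj).symm
    · exact hnadj t ht ((addPendant_adj_some_some G x x t).mp hadj)
    · exact (addPendant G x).irrefl hadj
  have hi2 : IndepSet (addPendant G x) ((some '' S') ∪ {none}) := by
    rintro a (⟨s, hs, rfl⟩ | rfl) b (⟨t, ht, rfl⟩ | rfl) hadj
    · exact hS'i hs ht ((addPendant_adj_some_some G x s t).mp hadj)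
    · have hsx : s = x := by simpa using (addPendant_adj_none G x (some s)).mp hadj.symm
      exact hxS' (hsx ▸ hs)
    · have htx : t = x := by simpa using (addPendant_adj_none G x (some t)).mp hadj
      exact hxS' (htx ▸ ht)
    · exact (addPendant G x).irrefl hadj
  constructor
  · refine ⟨hi1, fun T hTi hST => Set.Subset.antisymm hST fun a ha => ?_⟩
    match a with
    | none =>
      exact absurd ((addPendant_adj_none G x (some x)).mpr rfl)
        (hTi ha (hST (Or.inr rfl)))
    | some v =>
      by_cases hvx : v = x
      · exact Or.inr (by simp [hvx])
      · exact Or.inl ⟨v, key T hTi (fun z hz => hST (Or.inl hz)) v ha hvx, rfl⟩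
  · refine ⟨hi2, fun T hTi hST => Set.Subset.antisymm hST fun a ha => ?_⟩
    match a with
    | none => exact Or.inr rfl
    | some v =>
      by_cases hvx : v = x
      · exact absurd ((addPendant_adj_none G x (some x)).mpr rfl)
          (hTi (hST (Or.inr rfl)) (hvx ▸ ha))
      · exact Or.inl ⟨v, key T hTi (fun z hz => hST (Or.inl hz)) v ha hvx, rfl⟩
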